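/- A Hom-finite k-linear additive category C is Krull–Schmidt if and only if every idempotent in C splits, if and only if for every indecomposable object X the endomorphism ring End_C(X) has no non-trivial idempotents. -/

import Mathlib

set_option linter.unusedSectionVars false
set_option maxHeartbeats 1000000

open CategoryTheory CategoryTheory.Limits

/-- An object `X` of an additive category is indecomposable if it is nonzero and in any
decomposition `X ≅ Y ⊞ Z` one of the summands is zero. -/
def IsIndecomposableObj {C : Type*} [Category C] [Preadditive C] [HasFiniteBiproducts C]
    [HasBinaryBiproducts C] (X : C) : Prop :=
  ¬ IsZero X ∧ ∀ Y Z : C, Nonempty (X ≅ Y ⊞ Z) → IsZero Y ∨ IsZero Z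

/-- An additive category is Krull–Schmidt if every object is a finite direct sum of
objects with local endomorphism rings. -/
def IsKrullSchmidt (C : Type*) [Category C] [Preadditive C] [HasFiniteBiproducts C] : Prop :=
  ∀ X : C, ∃ (n : ℕ) (Y : Fin n → C),
    Nonempty (X ≅ ⨁ Y) ∧ ∀ i, IsLocalRing (CategoryTheory.End (Y i))

section Algebra
open Polynomial

theorem nilp_or_unit {k A : Type*} [Field k] [Ring A] [Algebra k A]
    [FiniteDimensional k A] [Nontrivial A]
    (h : ∀ e : A, e * e = e → e = 0 ∨ e = 1) (a : A) : IsNilpotent a ∨ IsUnit a := by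
  have hint : IsIntegral k a := IsIntegral.of_finite k a
  set p : k[X] := minpoly k a with hp
  have hp0 : p ≠ 0 := minpoly.ne_zero hint
  have hpa : aeval a p = 0 := minpoly.aeval k a
  obtain ⟨q, hpq, hndvd⟩ := p.exists_eq_pow_rootMultiplicity_mul_and_not_dvd hp0 0
  rw [map_zero, sub_zero] at hpq hndvd
  set m := p.rootMultiplicity 0 with hm
  clear_value m
  rcases Nat.eq_zero_or_pos m with hm0 | hmpos
  · -- constant term nonzero : a is a unit
    right
    subst hm0
    rw [pow_zero, one_mul] at hpq
    subst hpq
    have hc : p.coeff 0 ≠ 0 := fun hc0 => hndvd (X_dvd_iff.2 hc0)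
    set c := p.coeff 0 with hcdef
    have hdx : aeval a (divX p * X + C c) = 0 := by rw [p.divX_mul_X_add]; exact hpa
    set b := aeval a (divX p) with hb
    have hba : b * a + algebraMap k A c = 0 := by
      simpa [hb, map_add, map_mul] using hdx
    have hcomm : a * b = b * a := by
      simpa using ((Commute.all (X : k[X]) (divX p)).map (aeval a)).eq
    have hba' : b * a = -(algebraMap k A c) := eq_neg_of_add_eq_zero_left hba
    have key : ((-c⁻¹) • b) * a = 1 := by
      rw [smul_mul_assoc, hba', smul_neg, neg_smul, neg_neg, Algebra.smul_def, ← map_mul,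
        inv_mul_cancel₀ hc, map_one]
    refine isUnit_iff_exists.2 ⟨(-c⁻¹) • b, ?_, key⟩
    rw [mul_smul_comm, hcomm, ← smul_mul_assoc, key]
  · have hcop : IsCoprime ((X : k[X]) ^ m) q :=
      ((Polynomial.prime_X.coprime_iff_not_dvd).2 hndvd).pow_left
    obtain ⟨u, v, huv⟩ := hcop
    set E := aeval a (v * q) with hE
    have h0 : aeval a (X ^ m * q) = 0 := by rw [← hpq]; exact hpa
    have hEE : E * E = E := by
      have key : (v * q) * (v * q) = v * q - (v * u) * (X ^ m * q) := by
        linear_combination (v * q) * huv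
      have hz : aeval a (v * u * (X ^ m * q)) = 0 := by rw [map_mul, h0, mul_zero]
      rw [hE, ← map_mul, key, map_sub, hz, sub_zero]
    have hcomm : ∀ f : k[X], a * aeval a f = aeval a f * a := fun f => by
      simpa using ((Commute.all (X : k[X]) f).map (aeval a)).eq
    rcases h E hEE with h0E | h1E
    · -- E = 0 : a is a unit
      right
      have hu1 : aeval a u * a ^ m = 1 := by
        have : aeval a (u * X ^ m) + E = 1 := by
          rw [hE, ← map_add, huv, map_one]
        simpa [h0E, map_mul, map_pow] using this
      obtain ⟨m', rfl⟩ := Nat.exists_eq_succ_of_ne_zero hmpos.ne'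
      have hcw : a * aeval a u = aeval a u * a := hcomm u
      have hcwp : Commute (aeval a u) a := by
        simpa using ((Commute.all u (X : k[X])).map (aeval a))
      refine isUnit_iff_exists.2 ⟨a ^ m' * aeval a u, ?_, ?_⟩
      · calc a * (a ^ m' * aeval a u) = a ^ (m' + 1) * aeval a u := by
              rw [← mul_assoc, ← pow_succ']
          _ = 1 := by rw [← (hcwp.pow_right (m' + 1)).eq, hu1]
      · calc (a ^ m' * aeval a u) * a = a ^ m' * (a * aeval a u) := by
              rw [mul_assoc, hcw]
          _ = a ^ (m' + 1) * aeval a u := by rw [← mul_assoc, ← pow_succ]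
          _ = 1 := by rw [← (hcwp.pow_right (m' + 1)).eq, hu1]
    · -- E = 1 : a is nilpotent
      left
      refine ⟨m, ?_⟩
      calc a ^ m = a ^ m * E := by rw [h1E, mul_one]
        _ = aeval a (X ^ m * (v * q)) := by simp [hE, map_mul, map_pow]
        _ = aeval a (v * (X ^ m * q)) := by
              have hring : (X : k[X]) ^ m * (v * q) = v * (X ^ m * q) := by ring
              rw [hring]
        _ = 0 := by rw [map_mul, h0, mul_zero]

theorem local_of_trivial_idem {k A : Type*} [Field k] [Ring A] [Algebra k A]
    [FiniteDimensional k A] [Nontrivial A]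
    (h : ∀ e : A, e * e = e → e = 0 ∨ e = 1) : IsLocalRing A := by
  refine ⟨fun {a b} hab => ?_⟩
  rcases nilp_or_unit (k := k) h a with hn | hu
  · right
    have hb : b = 1 - a := eq_sub_of_add_eq' hab
    rw [hb]
    exact hn.isUnit_one_sub
  · exact Or.inl hu

end Algebra

namespace KSAux

section
variable {C : Type*} [Category C] [Preadditive C] [HasBinaryBiproducts C]

/-- Splitting data for an idempotent, matching `IsIdempotentComplete`. -/
def Splits {X : C} (p : X ⟶ X) : Prop :=
  ∃ (Y : C) (i : Y ⟶ X) (e : X ⟶ Y), i ≫ e = 𝟙 Y ∧ e ≫ i = p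

theorem splits_transport {X X' : C} (α : X ⟶ X') (β : X' ⟶ X) (hβα : β ≫ α = 𝟙 X')
    {p : X' ⟶ X'} (hp : Splits p) : Splits (α ≫ p ≫ β) := by
  obtain ⟨Z, i, r, hir, hri⟩ := hp
  refine ⟨Z, i ≫ β, α ≫ r, ?_, ?_⟩
  · rw [Category.assoc, ← Category.assoc β, hβα, Category.id_comp, hir]
  · rw [← hri]; simp
theorem splits_add {X : C} {p₁ p₂ : X ⟶ X} (h₁ : Splits p₁) (h₂ : Splits p₂)
    (h₁₂ : p₁ ≫ p₂ = 0) (h₂₁ : p₂ ≫ p₁ = 0) : Splits (p₁ + p₂) := by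
  obtain ⟨Z₁, i₁, r₁, hir₁, hri₁⟩ := h₁
  obtain ⟨Z₂, i₂, r₂, hir₂, hri₂⟩ := h₂
  have hi₁ : i₁ ≫ r₂ = 0 := by
    have e1 : i₁ = i₁ ≫ p₁ := by rw [← hri₁, ← Category.assoc, hir₁, Category.id_comp]
    have e2 : r₂ = p₂ ≫ r₂ := by rw [← hri₂, Category.assoc, hir₂, Category.comp_id]
    rw [e1, e2, Category.assoc, ← Category.assoc p₁, h₁₂]; simp
  have hi₂ : i₂ ≫ r₁ = 0 := by
    have e1 : i₂ = i₂ ≫ p₂ := by rw [← hri₂, ← Category.assoc, hir₂, Category.id_comp]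
    have e2 : r₁ = p₁ ≫ r₁ := by rw [← hri₁, Category.assoc, hir₁, Category.comp_id]
    rw [e1, e2, Category.assoc, ← Category.assoc p₂, h₂₁]; simp
  refine ⟨Z₁ ⊞ Z₂, biprod.desc i₁ i₂, biprod.lift r₁ r₂, ?_, ?_⟩
  · apply biprod.hom_ext' <;> apply biprod.hom_ext <;>
      simp [hir₁, hir₂, hi₁, hi₂]
  · rw [biprod.lift_desc, hri₁, hri₂]

theorem conj_lemma {A B : C} (eb : A ⊞ B ⟶ A ⊞ B) (heb : eb ≫ eb = eb) (a' : A ⟶ A)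
    (h1 : (biprod.inl ≫ eb ≫ biprod.fst) ≫ a' = 𝟙 A)
    (h2 : a' ≫ (biprod.inl ≫ eb ≫ biprod.fst) = 𝟙 A) :
    ∃ Ψ Ψ' : A ⊞ B ⟶ A ⊞ B, Ψ ≫ Ψ' = 𝟙 _ ∧ Ψ' ≫ Ψ = 𝟙 _ ∧
      biprod.inl ≫ (Ψ ≫ eb ≫ Ψ') = biprod.inl := by
  have heb' : ∀ {Z : C} (h : A ⊞ B ⟶ Z), eb ≫ eb ≫ h = eb ≫ h := fun h => by
    rw [← Category.assoc, heb]
  have h1' : biprod.inl ≫ eb ≫ biprod.fst ≫ a' = 𝟙 A := by simpa using h1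
  set u : A ⟶ A ⊞ B := biprod.inl ≫ eb with hu
  set Ψ : A ⊞ B ⟶ A ⊞ B := biprod.desc u biprod.inr with hΨ
  set Ψ' : A ⊞ B ⟶ A ⊞ B :=
    biprod.lift (biprod.fst ≫ a') (biprod.snd - biprod.fst ≫ a' ≫ u ≫ biprod.snd) with hΨ'
  refine ⟨Ψ, Ψ', ?_, ?_, ?_⟩
  · apply biprod.hom_ext' <;> apply biprod.hom_ext <;>
      simp [hΨ, hΨ', hu, heb', h1, h1', reassoc_of% h1, sub_eq_zero]
  · apply biprod.hom_ext' <;> apply biprod.hom_ext <;>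
      simp [hΨ, hΨ', hu, heb', h2, reassoc_of% h2, sub_eq_zero]
  · apply biprod.hom_ext <;>
      simp [hΨ, hΨ', hu, heb', h1, h1', reassoc_of% h1, sub_eq_zero]


theorem core1 {A B : C} (e : A ⊞ B ⟶ A ⊞ B) (he : e ≫ e = e) (a' : A ⟶ A)
    (h1 : (biprod.inl ≫ e ≫ biprod.fst) ≫ a' = 𝟙 A)
    (h2 : a' ≫ (biprod.inl ≫ e ≫ biprod.fst) = 𝟙 A)
    (hB : ∀ f : B ⟶ B, f ≫ f = f → Splits f) : Splits e := by
  obtain ⟨Ψ, Ψ', hΨΨ', hΨ'Ψ, hinl⟩ := conj_lemma e he a' h1 h2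
  set et : A ⊞ B ⟶ A ⊞ B := Ψ ≫ e ≫ Ψ' with het
  have hetid : et ≫ et = et := by
    rw [het]
    calc (Ψ ≫ e ≫ Ψ') ≫ Ψ ≫ e ≫ Ψ' = Ψ ≫ e ≫ (Ψ' ≫ Ψ) ≫ e ≫ Ψ' := by simp
      _ = Ψ ≫ (e ≫ e) ≫ Ψ' := by rw [hΨ'Ψ]; simp
      _ = Ψ ≫ e ≫ Ψ' := by rw [he]
  have hinl' : biprod.inl ≫ et = biprod.inl := by rw [het]; exact hinl
  set b : B ⟶ A := biprod.inr ≫ et ≫ biprod.fst with hb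
  set d : B ⟶ B := biprod.inr ≫ et ≫ biprod.snd with hd
  have htotal : (biprod.fst : A ⊞ B ⟶ A) ≫ biprod.inl + biprod.snd ≫ biprod.inr = 𝟙 _ :=
    biprod.total
  have hsr : (biprod.snd : A ⊞ B ⟶ B) ≫ biprod.inr
      = 𝟙 (A ⊞ B) - biprod.fst ≫ biprod.inl := by rw [← htotal]; abel
  have hinl'' : ∀ {W : C} (g : A ⊞ B ⟶ W), biprod.inl ≫ et ≫ g = biprod.inl ≫ g :=
    fun g => by rw [← Category.assoc, hinl']
  have het'' : ∀ {W : C} (g : A ⊞ B ⟶ W), et ≫ et ≫ g = et ≫ g :=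
    fun g => by rw [← Category.assoc, hetid]
  have hmid : ∀ {W : C} (g : A ⊞ B ⟶ W),
      et ≫ (biprod.snd ≫ biprod.inr) ≫ et ≫ g
        = et ≫ g - et ≫ biprod.fst ≫ biprod.inl ≫ g := by
    intro W g
    rw [hsr, Preadditive.sub_comp, Preadditive.comp_sub, Category.id_comp, het'']
    simp only [Category.assoc]
    rw [hinl'' g]
  have hdd : d ≫ d = d := by
    rw [hd]
    calc (biprod.inr ≫ et ≫ biprod.snd) ≫ biprod.inr ≫ et ≫ biprod.snd
        = biprod.inr ≫ et ≫ (biprod.snd ≫ biprod.inr) ≫ et ≫ biprod.snd := by simp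
      _ = biprod.inr ≫ (et ≫ biprod.snd - et ≫ biprod.fst ≫ biprod.inl ≫ biprod.snd) := by
          rw [hmid]
      _ = biprod.inr ≫ et ≫ biprod.snd := by simp
  have hdb : d ≫ b = 0 := by
    rw [hd, hb]
    calc (biprod.inr ≫ et ≫ biprod.snd) ≫ biprod.inr ≫ et ≫ biprod.fst
        = biprod.inr ≫ et ≫ (biprod.snd ≫ biprod.inr) ≫ et ≫ biprod.fst := by simp
      _ = biprod.inr ≫ (et ≫ biprod.fst - et ≫ biprod.fst ≫ biprod.inl ≫ biprod.fst) := by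
          rw [hmid]
      _ = 0 := by simp
  have hdecomp : et = (biprod.desc (𝟙 A) b) ≫ biprod.inl + biprod.snd ≫ d ≫ biprod.inr := by
    apply biprod.hom_ext' <;> apply biprod.hom_ext
    · rw [Preadditive.comp_add]
      simp only [Preadditive.add_comp, Category.assoc, biprod.inl_desc_assoc,
        biprod.inl_fst, biprod.inl_snd, biprod.inr_fst, biprod.inr_snd,
        Category.id_comp, Category.comp_id, zero_comp, comp_zero,
        biprod.inl_snd_assoc, biprod.inl_fst_assoc]
      rw [hinl'' biprod.fst]
      simp
    · rw [Preadditive.comp_add]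
      simp only [Preadditive.add_comp, Category.assoc, biprod.inl_desc_assoc,
        biprod.inl_fst, biprod.inl_snd, biprod.inr_fst, biprod.inr_snd,
        Category.id_comp, Category.comp_id, zero_comp, comp_zero,
        biprod.inl_snd_assoc, biprod.inl_fst_assoc]
      rw [hinl'' biprod.snd]
      simp
    · rw [Preadditive.comp_add]
      simp only [Preadditive.add_comp, Category.assoc, biprod.inr_desc_assoc,
        biprod.inl_fst, biprod.inl_snd, biprod.inr_fst, biprod.inr_snd,
        Category.id_comp, Category.comp_id, zero_comp, comp_zero]
      rw [← hb]
      simp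
    · rw [Preadditive.comp_add]
      simp only [Preadditive.add_comp, Category.assoc, biprod.inr_desc_assoc,
        biprod.inl_fst, biprod.inl_snd, biprod.inr_fst, biprod.inr_snd,
        Category.id_comp, Category.comp_id, zero_comp, comp_zero]
      rw [← hd]
      simp
  have hsplit_et : Splits et := by
    rw [hdecomp]
    apply splits_add
    · exact ⟨A, biprod.inl, biprod.desc (𝟙 A) b, by simp, rfl⟩
    · obtain ⟨Z, i, r, hir, hri⟩ := hB d hdd
      exact ⟨Z, i ≫ biprod.inr, biprod.snd ≫ r, by simp [hir], by
        rw [Category.assoc, ← Category.assoc r, hri]⟩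
    · simp
    · simp [reassoc_of% hdb]
  have : Splits (Ψ' ≫ et ≫ Ψ) := splits_transport Ψ' Ψ hΨΨ' hsplit_et
  have heq : Ψ' ≫ et ≫ Ψ = e := by
    rw [het]
    calc Ψ' ≫ (Ψ ≫ e ≫ Ψ') ≫ Ψ = (Ψ' ≫ Ψ) ≫ e ≫ (Ψ' ≫ Ψ) := by simp
      _ = e := by rw [hΨ'Ψ]; simp
  rwa [heq] at this

theorem core2 {A B : C} (e : A ⊞ B ⟶ A ⊞ B) (he : e ≫ e = e) (a' : A ⟶ A)
    (h1 : (biprod.inl ≫ (𝟙 _ - e) ≫ biprod.fst) ≫ a' = 𝟙 A)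
    (h2 : a' ≫ (biprod.inl ≫ (𝟙 _ - e) ≫ biprod.fst) = 𝟙 A)
    (hB : ∀ f : B ⟶ B, f ≫ f = f → Splits f) : Splits e := by
  have heb : (𝟙 (A ⊞ B) - e) ≫ (𝟙 _ - e) = 𝟙 _ - e := by
    simp [Preadditive.sub_comp, Preadditive.comp_sub, he]
  obtain ⟨Ψ, Ψ', hΨΨ', hΨ'Ψ, hinl⟩ := conj_lemma (𝟙 _ - e) heb a' h1 h2
  set eh : A ⊞ B ⟶ A ⊞ B := Ψ ≫ e ≫ Ψ' with heh
  have hehid : eh ≫ eh = eh := by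
    rw [heh]
    calc (Ψ ≫ e ≫ Ψ') ≫ Ψ ≫ e ≫ Ψ' = Ψ ≫ e ≫ (Ψ' ≫ Ψ) ≫ e ≫ Ψ' := by simp
      _ = Ψ ≫ (e ≫ e) ≫ Ψ' := by rw [hΨ'Ψ]; simp
      _ = Ψ ≫ e ≫ Ψ' := by rw [he]
  have hinl0 : biprod.inl ≫ eh = 0 := by
    have hc : Ψ ≫ (𝟙 _ - e) ≫ Ψ' = 𝟙 _ - eh := by
      rw [heh, Preadditive.sub_comp, Preadditive.comp_sub, Category.id_comp, hΨΨ']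
    rw [hc] at hinl
    simp only [Preadditive.comp_sub, Category.comp_id] at hinl
    rw [sub_eq_self] at hinl
    exact hinl
  set m : B ⟶ A ⊞ B := biprod.inr ≫ eh with hm
  set d : B ⟶ B := biprod.inr ≫ eh ≫ biprod.snd with hd
  have htotal : (biprod.fst : A ⊞ B ⟶ A) ≫ biprod.inl + biprod.snd ≫ biprod.inr = 𝟙 _ :=
    biprod.total
  have hsr2 : (biprod.snd : A ⊞ B ⟶ B) ≫ biprod.inr
      = 𝟙 (A ⊞ B) - biprod.fst ≫ biprod.inl := by rw [← htotal]; abel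
  have hdm : d ≫ m = m := by
    rw [hd, hm]
    calc (biprod.inr ≫ eh ≫ biprod.snd) ≫ biprod.inr ≫ eh
        = biprod.inr ≫ eh ≫ (biprod.snd ≫ biprod.inr) ≫ eh := by simp
      _ = biprod.inr ≫ eh ≫ (𝟙 _ - biprod.fst ≫ biprod.inl) ≫ eh := by rw [← hsr2]
      _ = biprod.inr ≫ (eh ≫ eh - eh ≫ biprod.fst ≫ biprod.inl ≫ eh) := by
          rw [Preadditive.sub_comp, Preadditive.comp_sub, Category.id_comp]
          congr 2
          simp
      _ = biprod.inr ≫ eh := by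
          rw [hehid, hinl0]
          simp
  have hdd : d ≫ d = d := by
    rw [hd]
    calc (biprod.inr ≫ eh ≫ biprod.snd) ≫ biprod.inr ≫ eh ≫ biprod.snd
        = ((biprod.inr ≫ eh ≫ biprod.snd) ≫ biprod.inr ≫ eh) ≫ biprod.snd := by simp
      _ = (biprod.inr ≫ eh) ≫ biprod.snd := by rw [← hm, ← hd, hdm]
      _ = biprod.inr ≫ eh ≫ biprod.snd := by simp
  have hehm : eh = biprod.snd ≫ m := by
    rw [hm]
    calc eh = (𝟙 _) ≫ eh := by simp
      _ = (biprod.fst ≫ biprod.inl + biprod.snd ≫ biprod.inr) ≫ eh := by rw [htotal]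
      _ = biprod.fst ≫ (biprod.inl ≫ eh) + biprod.snd ≫ biprod.inr ≫ eh := by
          rw [Preadditive.add_comp, Category.assoc, Category.assoc]
      _ = biprod.snd ≫ biprod.inr ≫ eh := by rw [hinl0]; simp
  have hsplit_eh : Splits eh := by
    obtain ⟨Z, i, r, hir, hri⟩ := hB d hdd
    refine ⟨Z, i ≫ m, biprod.snd ≫ r, ?_, ?_⟩
    · calc (i ≫ m) ≫ biprod.snd ≫ r = i ≫ (m ≫ biprod.snd) ≫ r := by simp
        _ = i ≫ d ≫ r := by rw [hm, hd]; simp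
        _ = (i ≫ r) ≫ (i ≫ r) := by rw [← hri]; simp
        _ = 𝟙 Z := by rw [hir]; simp
    · calc (biprod.snd ≫ r) ≫ i ≫ m = biprod.snd ≫ (r ≫ i) ≫ m := by simp
        _ = biprod.snd ≫ d ≫ m := by rw [hri]
        _ = biprod.snd ≫ m := by rw [hdm]
        _ = eh := hehm.symm
  have : Splits (Ψ' ≫ eh ≫ Ψ) := splits_transport Ψ' Ψ hΨΨ' hsplit_eh
  have heq : Ψ' ≫ eh ≫ Ψ = e := by
    rw [heh]
    calc Ψ' ≫ (Ψ ≫ e ≫ Ψ') ≫ Ψ = (Ψ' ≫ Ψ) ≫ e ≫ (Ψ' ≫ Ψ) := by simp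
      _ = e := by rw [hΨ'Ψ]; simp
  rwa [heq] at this

end

section
variable {C : Type*} [Category C] [Preadditive C] [HasFiniteBiproducts C]

theorem isZero_biproduct_of_isEmpty {J : Type} [Fintype J] [IsEmpty J] (Y : J → C) :
    IsZero (⨁ Y) := by
  rw [IsZero.iff_id_eq_zero]
  apply biproduct.hom_ext
  intro j
  exact isEmptyElim j

/-- Peel off the first summand of a biproduct over `Fin (n+1)`. -/
noncomputable def biproductSuccIso {n : ℕ} (Y : Fin (n + 1) → C) [HasBinaryBiproducts C] :
    ⨁ Y ≅ Y 0 ⊞ ⨁ (fun i : Fin n => Y i.succ) where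
  hom := biprod.lift (biproduct.π Y 0) (biproduct.lift fun i => biproduct.π Y i.succ)
  inv := biprod.desc (biproduct.ι Y 0) (biproduct.desc fun i => biproduct.ι Y i.succ)
  hom_inv_id := by
    rw [biprod.lift_desc, biproduct.lift_desc, ← biproduct.total, Fin.sum_univ_succ]
  inv_hom_id := by
    apply biprod.hom_ext'
    · apply biprod.hom_ext
      · simp
      · apply biproduct.hom_ext
        intro j
        simp [biproduct.ι_π, (Fin.succ_ne_zero j).symm]
    · apply biprod.hom_ext
      · apply biproduct.hom_ext'
        intro j
        simp [biproduct.ι_π, Fin.succ_ne_zero j]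
      · apply biproduct.hom_ext'
        intro j
        apply biproduct.hom_ext
        intro i
        by_cases h : j = i
        · subst h; simp [biproduct.ι_π]
        · simp [biproduct.ι_π, h, fun hh => h (Fin.succ_injective _ hh)]

end

section
variable {C : Type*} [Category C] [Preadditive C] [HasFiniteBiproducts C] [HasBinaryBiproducts C]

/-- Extract two-sided inverse from a unit in `End`. -/
theorem exists_inv_of_isUnit {X : C} {a : CategoryTheory.End X} (h : IsUnit a) :
    ∃ a' : X ⟶ X, a ≫ a' = 𝟙 X ∧ a' ≫ a = 𝟙 X := by
  obtain ⟨u, rfl⟩ := h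
  exact ⟨u.inv, u.inv_mul, u.mul_inv⟩

theorem splits_biproduct : ∀ (n : ℕ) (Y : Fin n → C)
    (_ : ∀ i, IsLocalRing (CategoryTheory.End (Y i))) (e : ⨁ Y ⟶ ⨁ Y),
    e ≫ e = e → Splits e := by
  intro n
  induction n with
  | zero =>
    intro Y _ e he
    exact ⟨⨁ Y, 𝟙 _, 𝟙 _, by simp, (isZero_biproduct_of_isEmpty Y).eq_of_src _ _⟩
  | succ n ih =>
    intro Y hY e he
    set φ := biproductSuccIso Y with hφ
    set eb := φ.inv ≫ e ≫ φ.hom with heb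
    have hebid : eb ≫ eb = eb := by
      rw [heb]
      calc (φ.inv ≫ e ≫ φ.hom) ≫ φ.inv ≫ e ≫ φ.hom
          = φ.inv ≫ e ≫ (φ.hom ≫ φ.inv) ≫ e ≫ φ.hom := by simp
        _ = φ.inv ≫ (e ≫ e) ≫ φ.hom := by rw [φ.hom_inv_id]; simp
        _ = φ.inv ≫ e ≫ φ.hom := by rw [he]
    have hB : ∀ f : (⨁ fun i : Fin n => Y i.succ) ⟶ ⨁ fun i : Fin n => Y i.succ,
        f ≫ f = f → Splits f := ih (fun i => Y i.succ) (fun i => hY i.succ)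
    set a : CategoryTheory.End (Y 0) := biprod.inl ≫ eb ≫ biprod.fst with ha
    haveI := hY 0
    have hsplit_eb : Splits eb := by
      rcases IsLocalRing.isUnit_or_isUnit_of_add_one (a := a) (b := 1 - a) (by abel) with hu | hu
      · obtain ⟨a', h1, h2⟩ := exists_inv_of_isUnit hu
        exact core1 eb hebid a' h1 h2 hB
      · obtain ⟨a', h1, h2⟩ := exists_inv_of_isUnit hu
        have hone : (1 : CategoryTheory.End (Y 0)) - a
            = biprod.inl ≫ (𝟙 _ - eb) ≫ biprod.fst := by
          rw [ha]
          simp [Preadditive.sub_comp, Preadditive.comp_sub, CategoryTheory.End.one_def]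
        rw [hone] at h1 h2
        exact core2 eb hebid a' h1 h2 hB
    have := splits_transport φ.hom φ.inv φ.inv_hom_id hsplit_eb
    have heq : φ.hom ≫ eb ≫ φ.inv = e := by
      rw [heb]
      calc φ.hom ≫ (φ.inv ≫ e ≫ φ.hom) ≫ φ.inv
          = (φ.hom ≫ φ.inv) ≫ e ≫ (φ.hom ≫ φ.inv) := by simp
        _ = e := by rw [φ.hom_inv_id]; simp
    rwa [heq] at this

noncomputable def biproductSumIso {J K : Type} [Fintype J] [Fintype K] (Y : J → C) (Z : K → C) :
    ⨁ (Sum.elim Y Z) ≅ (⨁ Y) ⊞ (⨁ Z) where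
  hom := biprod.lift (biproduct.lift fun j => biproduct.π (Sum.elim Y Z) (Sum.inl j))
                     (biproduct.lift fun k => biproduct.π (Sum.elim Y Z) (Sum.inr k))
  inv := biprod.desc (biproduct.desc fun j => biproduct.ι (Sum.elim Y Z) (Sum.inl j))
                     (biproduct.desc fun k => biproduct.ι (Sum.elim Y Z) (Sum.inr k))
  hom_inv_id := by
    rw [biprod.lift_desc]
    erw [biproduct.lift_desc, biproduct.lift_desc]
    rw [← biproduct.total]
    rw [Fintype.sum_sum_type]
    rfl
  inv_hom_id := by
    apply biprod.hom_ext'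
    · apply biprod.hom_ext
      · apply biproduct.hom_ext'
        intro j
        apply biproduct.hom_ext
        intro j'
        by_cases h : j = j'
        · subst h; simp only [Category.assoc, biprod.inl_desc_assoc, biprod.inr_desc_assoc, biprod.lift_fst, biprod.lift_snd]; erw [biproduct.ι_desc_assoc, biproduct.lift_π]; erw [biproduct.ι_π_self]; simp
        · simp only [Category.assoc, biprod.inl_desc_assoc, biprod.inr_desc_assoc, biprod.lift_fst, biprod.lift_snd]; erw [biproduct.ι_desc_assoc, biproduct.lift_π]; erw [biproduct.ι_π_ne _ (by simpa using h)]; simp [biproduct.ι_π, h]; rfl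
      · apply biproduct.hom_ext'
        intro j
        apply biproduct.hom_ext
        intro k
        simp only [Category.assoc, biprod.inl_desc_assoc, biprod.inr_desc_assoc, biprod.lift_fst, biprod.lift_snd]; erw [biproduct.ι_desc_assoc, biproduct.lift_π]; erw [biproduct.ι_π_ne _ (by simp)]; simp; rfl
    · apply biprod.hom_ext
      · apply biproduct.hom_ext'
        intro k
        apply biproduct.hom_ext
        intro j
        simp only [Category.assoc, biprod.inl_desc_assoc, biprod.inr_desc_assoc, biprod.lift_fst, biprod.lift_snd]; erw [biproduct.ι_desc_assoc, biproduct.lift_π]; erw [biproduct.ι_π_ne _ (by simp)]; simp; rfl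
      · apply biproduct.hom_ext'
        intro k
        apply biproduct.hom_ext
        intro k'
        by_cases h : k = k'
        · subst h; simp only [Category.assoc, biprod.inl_desc_assoc, biprod.inr_desc_assoc, biprod.lift_fst, biprod.lift_snd]; erw [biproduct.ι_desc_assoc, biproduct.lift_π]; erw [biproduct.ι_π_self]; simp
        · simp only [Category.assoc, biprod.inl_desc_assoc, biprod.inr_desc_assoc, biprod.lift_fst, biprod.lift_snd]; erw [biproduct.ι_desc_assoc, biproduct.lift_π]; erw [biproduct.ι_π_ne _ (by simpa using h)]; simp [biproduct.ι_π, h]; rfl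

noncomputable def biproductAppendIso {p q : ℕ} (Y : Fin p → C) (Z : Fin q → C) :
    ⨁ (Fin.append Y Z) ≅ (⨁ Y) ⊞ (⨁ Z) :=
  (biproduct.whiskerEquiv finSumFinEquiv
    (fun j => by
      cases j with
      | inl i => exact eqToIso (by rw [finSumFinEquiv_apply_left, Fin.append_left]; rfl)
      | inr i => exact eqToIso (by rw [finSumFinEquiv_apply_right, Fin.append_right]; rfl))).symm
    ≪≫ biproductSumIso Y Z

variable (k : Type*) [Field k] [Linear k C]

theorem finrank_add_le_of_biprod_iso {X Y Z : C} (φ : X ≅ Y ⊞ Z)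
    (homfin : ∀ A B : C, FiniteDimensional k (A ⟶ B)) :
    Module.finrank k (Y ⟶ Y) + Module.finrank k (Z ⟶ Z) ≤ Module.finrank k (X ⟶ X) := by
  haveI := homfin X X
  haveI := homfin Y Y
  haveI := homfin Z Z
  let L : ((Y ⟶ Y) × (Z ⟶ Z)) →ₗ[k] (X ⟶ X) :=
    { toFun := fun p => φ.hom ≫ (biprod.fst ≫ p.1 ≫ biprod.inl
        + biprod.snd ≫ p.2 ≫ biprod.inr) ≫ φ.inv
      map_add' := fun p q => by
        simp only [Prod.fst_add, Prod.snd_add, Preadditive.comp_add, Preadditive.add_comp]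
        abel
      map_smul' := fun c p => by
        simp only [Prod.smul_fst, Prod.smul_snd, Linear.comp_smul, Linear.smul_comp,
          Preadditive.comp_add, Preadditive.add_comp, RingHom.id_apply, smul_add] }
  have hinj : Function.Injective L := by
    intro p q hpq
    have h1 : ∀ r : (Y ⟶ Y) × (Z ⟶ Z),
        biprod.inl ≫ φ.inv ≫ L r ≫ φ.hom ≫ biprod.fst = r.1 := by
      intro r
      simp [L, Preadditive.comp_add, Preadditive.add_comp]
    have h2 : ∀ r : (Y ⟶ Y) × (Z ⟶ Z),
        biprod.inr ≫ φ.inv ≫ L r ≫ φ.hom ≫ biprod.snd = r.2 := by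
      intro r
      simp [L, Preadditive.comp_add, Preadditive.add_comp]
    have e1 : p.1 = q.1 := by rw [← h1 p, ← h1 q, hpq]
    have e2 : p.2 = q.2 := by rw [← h2 p, ← h2 q, hpq]
    exact Prod.ext e1 e2
  have := LinearMap.finrank_le_finrank_of_injective hinj
  rwa [Module.finrank_prod] at this

theorem decomp_aux (homfin : ∀ A B : C, FiniteDimensional k (A ⟶ B)) :
    ∀ (N : ℕ) (X : C), Module.finrank k (X ⟶ X) < N →
    ∃ (n : ℕ) (Y : Fin n → C), Nonempty (X ≅ ⨁ Y) ∧ ∀ i, IsIndecomposableObj (Y i) := by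
  intro N
  induction N with
  | zero => intro X h; omega
  | succ N ih =>
    intro X hX
    by_cases hz : IsZero X
    · exact ⟨0, Fin.elim0, ⟨hz.iso (isZero_biproduct_of_isEmpty _)⟩, fun i => i.elim0⟩
    by_cases hind : IsIndecomposableObj X
    · exact ⟨1, fun _ => X, ⟨(biproductUniqueIso (fun _ : Fin 1 => X)).symm⟩, fun _ => hind⟩
    · rw [IsIndecomposableObj] at hind
      push_neg at hind
      obtain ⟨Y, Z, ⟨φ⟩, hYnz, hZnz⟩ := hind hz
      have hfr := finrank_add_le_of_biprod_iso k φ homfin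
      have hY1 : 1 ≤ Module.finrank k (Y ⟶ Y) := by
        haveI := homfin Y Y
        haveI : Nontrivial (Y ⟶ Y) := ⟨𝟙 Y, 0, fun h => hYnz ((IsZero.iff_id_eq_zero Y).2 h)⟩
        exact Module.finrank_pos
      have hZ1 : 1 ≤ Module.finrank k (Z ⟶ Z) := by
        haveI := homfin Z Z
        haveI : Nontrivial (Z ⟶ Z) := ⟨𝟙 Z, 0, fun h => hZnz ((IsZero.iff_id_eq_zero Z).2 h)⟩
        exact Module.finrank_pos
      obtain ⟨p, Y', ⟨ψY⟩, hYind⟩ := ih Y (by omega)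
      obtain ⟨q, Z', ⟨ψZ⟩, hZind⟩ := ih Z (by omega)
      refine ⟨p + q, Fin.append Y' Z',
        ⟨φ ≪≫ biprod.mapIso ψY ψZ ≪≫ (biproductAppendIso Y' Z').symm⟩, ?_⟩
      intro i
      refine Fin.addCases (motive := fun i => IsIndecomposableObj (Fin.append Y' Z' i))
        (fun j => ?_) (fun j => ?_) i
      · show IsIndecomposableObj (Fin.append Y' Z' (Fin.castAdd q j))
        rw [Fin.append_left]; exact hYind j
      · show IsIndecomposableObj (Fin.append Y' Z' (Fin.natAdd p j))
        rw [Fin.append_right]; exact hZind j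

theorem ks_to_ic (hKS : IsKrullSchmidt C) : IsIdempotentComplete C := by
  constructor
  intro X p hp
  obtain ⟨n, Y, ⟨φ⟩, hloc⟩ := hKS X
  have hq : (φ.inv ≫ p ≫ φ.hom) ≫ (φ.inv ≫ p ≫ φ.hom) = φ.inv ≫ p ≫ φ.hom := by
    calc (φ.inv ≫ p ≫ φ.hom) ≫ φ.inv ≫ p ≫ φ.hom
        = φ.inv ≫ p ≫ (φ.hom ≫ φ.inv) ≫ p ≫ φ.hom := by simp
      _ = φ.inv ≫ (p ≫ p) ≫ φ.hom := by rw [φ.hom_inv_id]; simp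
      _ = φ.inv ≫ p ≫ φ.hom := by rw [hp]
  have hs := splits_biproduct n Y hloc _ hq
  have := splits_transport φ.hom φ.inv φ.inv_hom_id hs
  have heq : φ.hom ≫ (φ.inv ≫ p ≫ φ.hom) ≫ φ.inv = p := by
    calc φ.hom ≫ (φ.inv ≫ p ≫ φ.hom) ≫ φ.inv
        = (φ.hom ≫ φ.inv) ≫ p ≫ (φ.hom ≫ φ.inv) := by simp
      _ = p := by rw [φ.hom_inv_id]; simp
  rw [heq] at this
  exact this

theorem ic_to_cond (hIC : IsIdempotentComplete C) :
    ∀ X : C, IsIndecomposableObj X →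
      ∀ e : CategoryTheory.End X, e * e = e → e = 0 ∨ e = 1 := by
  intro X hX e he
  obtain ⟨f, hf⟩ : ∃ f : X ⟶ X, e = f := ⟨e, rfl⟩
  have he' : f ≫ f = f := by rw [← hf]; exact he
  have he'' : (𝟙 X - f) ≫ (𝟙 X - f) = 𝟙 X - f := by
    simp [Preadditive.sub_comp, Preadditive.comp_sub, he']
  obtain ⟨Y, i₁, r₁, hir₁, hri₁⟩ := hIC.idempotents_split X f he'
  obtain ⟨Z, i₂, r₂, hir₂, hri₂⟩ := hIC.idempotents_split X (𝟙 X - f) he''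
  have hie₁ : i₁ ≫ f = i₁ := by rw [← hri₁, ← Category.assoc, hir₁, Category.id_comp]
  have hre₂ : (𝟙 X - f) ≫ r₂ = r₂ := by
    rw [← hri₂, Category.assoc, hir₂, Category.comp_id]
  have hi₁r₂ : i₁ ≫ r₂ = 0 := by
    rw [← hre₂, ← Category.assoc, Preadditive.comp_sub, Category.comp_id, hie₁,
      sub_self, zero_comp]
  have hie₂ : i₂ ≫ (𝟙 X - f) = i₂ := by
    rw [← hri₂, ← Category.assoc, hir₂, Category.id_comp]
  have hre₁ : f ≫ r₁ = r₁ := by rw [← hri₁, Category.assoc, hir₁, Category.comp_id]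
  have hi₂r₁ : i₂ ≫ r₁ = 0 := by
    have hz : (𝟙 X - f) ≫ f ≫ r₁ = 0 := by
      rw [← Category.assoc, Preadditive.sub_comp, Category.id_comp, he', sub_self, zero_comp]
    rw [← hre₁, ← hie₂, Category.assoc, hz, comp_zero]
  have φ : X ≅ Y ⊞ Z :=
    { hom := biprod.lift r₁ r₂
      inv := biprod.desc i₁ i₂
      hom_inv_id := by rw [biprod.lift_desc, hri₁, hri₂]; abel
      inv_hom_id := by
        apply biprod.hom_ext' <;> apply biprod.hom_ext <;>
          simp [hir₁, hir₂, hi₁r₂, hi₂r₁] }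
  rcases hX.2 Y Z ⟨φ⟩ with hY | hZ
  · left
    have h1 : i₁ = 0 := hY.eq_of_src i₁ 0
    have h2 : f = 0 := by rw [← hri₁, h1, comp_zero]
    rw [hf]
    exact h2
  · right
    have h1 : i₂ = 0 := hZ.eq_of_src i₂ 0
    have h0 : 𝟙 X - f = 0 := by rw [← hri₂, h1, comp_zero]
    have h2 : f = 𝟙 X := by
      rw [sub_eq_zero] at h0
      exact h0.symm
    rw [hf]
    exact h2

variable (k : Type*) [Field k] [Linear k C]

theorem cond_to_ks (homfin : ∀ A B : C, FiniteDimensional k (A ⟶ B))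
    (hcond : ∀ X : C, IsIndecomposableObj X →
      ∀ e : CategoryTheory.End X, e * e = e → e = 0 ∨ e = 1) : IsKrullSchmidt C := by
  intro X
  obtain ⟨n, Y, hiso, hind⟩ :=
    decomp_aux k homfin (Module.finrank k (X ⟶ X) + 1) X (Nat.lt_succ_self _)
  refine ⟨n, Y, hiso, fun i => ?_⟩
  haveI : FiniteDimensional k (CategoryTheory.End (Y i)) := homfin _ _
  haveI : Nontrivial (CategoryTheory.End (Y i)) :=
    ⟨1, 0, fun h => (hind i).1 ((IsZero.iff_id_eq_zero _).2 h)⟩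
  exact local_of_trivial_idem (k := k) (hcond (Y i) (hind i))
end

end KSAux

/-- A Hom-finite `k`-linear additive category `C` is Krull–Schmidt iff every idempotent
in `C` splits, iff the endomorphism ring of every indecomposable object has no
non-trivial idempotents. -/
theorem stmt_8 (k : Type*) [Field k] {C : Type*} [Category C] [Preadditive C]
    [HasFiniteBiproducts C] [HasBinaryBiproducts C] [Linear k C]
    (homfin : ∀ X Y : C, FiniteDimensional k (X ⟶ Y)) :
    (IsKrullSchmidt C ↔ IsIdempotentComplete C) ∧
    (IsKrullSchmidt C ↔
      ∀ X : C, IsIndecomposableObj X →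
        ∀ e : CategoryTheory.End X, e * e = e → e = 0 ∨ e = 1) := by
  have hAB : IsKrullSchmidt C → IsIdempotentComplete C := KSAux.ks_to_ic
  have hBC : IsIdempotentComplete C →
      ∀ X : C, IsIndecomposableObj X →
        ∀ e : CategoryTheory.End X, e * e = e → e = 0 ∨ e = 1 := KSAux.ic_to_cond
  have hCA := KSAux.cond_to_ks k homfin
  exact ⟨⟨hAB, fun h => hCA (hBC h)⟩, ⟨fun h => hBC (hAB h), hCA⟩⟩
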